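/- Let A be a complete Boolean algebra with a finitely additive strictly positive measure μ. Let g ∈ ω^ω, let φ̇ be an A-name for a g-slalom, and h(n) = n·g(n). Then there is an h-slalom ψ in the ground model, namely ψ(n) = {k : μ(⟦k ∈ φ̇(n)⟧) ≥ 1/n}, such that for every f ∈ ω^ω, if ψ does not localize f then the trivial condition forces that φ̇ does not localize f. -/
import Mathlib


section Aux

variable {A : Type*} [CompleteBooleanAlgebra A] (μ : A → ℝ)

/-- `Bval a s j` = Boolean value that at least `j` of the `a k`, `k ∈ s`, hold. -/
private def Bval (a : ℕ → A) (s : Finset ℕ) (j : ℕ) : A :=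
  (s.powersetCard j).sup fun t => t.inf a

private lemma Bval_zero (a : ℕ → A) (s : Finset ℕ) : Bval a s 0 = ⊤ := by
  simp [Bval]

private lemma Bval_bot (a : ℕ → A) {s : Finset ℕ} {j : ℕ} (h : s.card < j) :
    Bval a s j = ⊥ := by
  rw [Bval, Finset.powersetCard_eq_empty.2 h, Finset.sup_empty]

private lemma Bval_succ_le (a : ℕ → A) (s : Finset ℕ) (j : ℕ) :
    Bval a s (j + 1) ≤ Bval a s j := by
  apply Finset.sup_le
  intro t ht
  rw [Finset.mem_powersetCard] at ht
  obtain ⟨t', ht', hc⟩ := Finset.exists_subset_card_eq (show j ≤ t.card by rw [ht.2]; exact Nat.le_succ j)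
  exact le_trans (Finset.inf_mono ht') (Finset.le_sup (f := fun t => t.inf a)
    (Finset.mem_powersetCard.2 ⟨ht'.trans ht.1, hc⟩))

private lemma Bval_insert (a : ℕ → A) {x : ℕ} {s : Finset ℕ} (hx : x ∉ s) (j : ℕ) :
    Bval a (insert x s) (j + 1) = Bval a s (j + 1) ⊔ (a x ⊓ Bval a s j) := by
  rw [Bval, Finset.powersetCard_succ_insert hx, Finset.sup_union, Finset.sup_image]
  congr 1
  rw [Bval, Finset.sup_inf_distrib_left]
  apply Finset.sup_congr rfl
  intro t ht
  rw [Finset.mem_powersetCard] at ht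
  have hxt : x ∉ t := fun h => hx (ht.1 h)
  simp [Finset.inf_insert]

variable (hbot : μ ⊥ = 0) (htop : μ ⊤ = 1)
    (hadd : ∀ a b : A, a ⊓ b = ⊥ → μ (a ⊔ b) = μ a + μ b)
    (hpos : ∀ a : A, a ≠ ⊥ → 0 < μ a)

include hbot hpos in
private lemma mu_nonneg (a : A) : 0 ≤ μ a := by
  rcases eq_or_ne a ⊥ with h | h
  · rw [h, hbot]
  · exact (hpos a h).le

include hbot hadd hpos in
private lemma mu_mono {a b : A} (h : a ≤ b) : μ a ≤ μ b := by
  have hd : a ⊓ (b ⊓ aᶜ) = ⊥ := by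
    rw [← inf_assoc, inf_comm a b, inf_assoc, inf_compl_eq_bot, inf_bot_eq]
  have hu : a ⊔ (b ⊓ aᶜ) = b := by
    rw [sup_inf_left, sup_compl_eq_top, inf_top_eq, sup_eq_right.2 h]
  have := hadd a (b ⊓ aᶜ) hd
  rw [hu] at this
  have hn := mu_nonneg μ hbot hpos (b ⊓ aᶜ)
  linarith

omit hpos in
include hbot hadd in
private lemma mu_modular (a b : A) : μ (a ⊔ b) = μ a + μ b - μ (a ⊓ b) := by
  have h1 : (a ⊓ bᶜ) ⊓ b = ⊥ := by
    rw [inf_assoc, compl_inf_eq_bot, inf_bot_eq]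
  have h2 : (a ⊓ bᶜ) ⊔ b = a ⊔ b := by
    rw [sup_comm, sup_inf_left, sup_compl_eq_top, inf_top_eq, sup_comm]
  have h3 : (a ⊓ bᶜ) ⊓ (a ⊓ b) = ⊥ := by
    rw [inf_comm a b, ← inf_assoc, inf_assoc a bᶜ b, compl_inf_eq_bot, inf_bot_eq, bot_inf_eq]
  have h4 : (a ⊓ bᶜ) ⊔ (a ⊓ b) = a := by
    rw [← inf_sup_left, compl_sup_eq_top, inf_top_eq]
  have e1 := hadd _ _ h1
  rw [h2] at e1
  have e2 := hadd _ _ h3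
  rw [h4] at e2
  linarith

omit hpos in
include hbot hadd in
private lemma sum_mu_eq (a : ℕ → A) (N : ℕ) :
    ∀ s : Finset ℕ, s.card ≤ N →
      ∑ k ∈ s, μ (a k) = ∑ j ∈ Finset.range N, μ (Bval a s (j + 1)) := by
  intro s
  induction s using Finset.induction_on with
  | empty =>
    intro _
    rw [Finset.sum_empty]
    symm
    apply Finset.sum_eq_zero
    intro j _
    rw [Bval_bot a (show (∅ : Finset ℕ).card < j + 1 by simp)]
    exact hbot
  | @insert x s hx ih =>
    intro hcard
    have hcs : s.card + 1 ≤ N := by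
      rwa [Finset.card_insert_of_notMem hx] at hcard
    rw [Finset.sum_insert hx, ih (by omega)]
    have hterm : ∀ j, μ (Bval a (insert x s) (j + 1)) =
        μ (Bval a s (j + 1)) + (μ (a x ⊓ Bval a s j) - μ (a x ⊓ Bval a s (j + 1))) := by
      intro j
      rw [Bval_insert a hx j, mu_modular μ hbot hadd]
      have hmeet : Bval a s (j + 1) ⊓ (a x ⊓ Bval a s j) = a x ⊓ Bval a s (j + 1) := by
        rw [inf_left_comm]
        congr 1
        exact inf_eq_left.2 (Bval_succ_le a s j)
      rw [hmeet]; ring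
    simp_rw [hterm]
    rw [Finset.sum_add_distrib, Finset.sum_range_sub' (fun j => μ (a x ⊓ Bval a s j)) N,
      Bval_zero, inf_top_eq, Bval_bot a (show s.card < N by omega), inf_bot_eq, hbot]
    ring

include hbot htop hadd hpos in
private lemma sum_mu_le (a : ℕ → A) (m : ℕ)
    (hm : ∀ t : Finset ℕ, m < t.card → t.inf a = ⊥) (s : Finset ℕ) :
    ∑ k ∈ s, μ (a k) ≤ m := by
  rw [sum_mu_eq μ hbot hadd a s.card s le_rfl]
  have hterm : ∀ j ∈ Finset.range s.card,
      μ (Bval a s (j + 1)) ≤ if j < m then (1 : ℝ) else 0 := by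
    intro j _
    by_cases hj : j < m
    · simp only [hj, if_true]
      rw [← htop]
      exact mu_mono μ hbot hadd hpos le_top
    · simp only [hj, if_false]
      have hB : Bval a s (j + 1) = ⊥ := by
        apply (Finset.sup_eq_bot_iff _ _).2
        intro t ht
        rw [Finset.mem_powersetCard] at ht
        exact hm t (by omega)
      rw [hB, hbot]
  calc ∑ j ∈ Finset.range s.card, μ (Bval a s (j + 1))
      ≤ ∑ j ∈ Finset.range s.card, if j < m then (1 : ℝ) else 0 :=
        Finset.sum_le_sum hterm
    _ = ((Finset.range s.card).filter (fun j => j < m)).card := by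
        rw [Finset.sum_boole]
    _ ≤ m := by
        have hss : (Finset.range s.card).filter (fun j => j < m) ⊆ Finset.range m := by
          intro j hj
          rw [Finset.mem_filter] at hj
          exact Finset.mem_range.2 hj.2
        calc (((Finset.range s.card).filter (fun j => j < m)).card : ℝ)
            ≤ ((Finset.range m).card : ℝ) := by exact_mod_cast Finset.card_le_card hss
          _ = m := by simp

end Aux

/-- Kamburelis' localization property for algebras with a finitely additive strictly
positive measure: if `φ̇` is a name for a `g`-slalom (given by Boolean values
`Φ n k = ⟦k ∈ φ̇(n)⟧`), and `h(n) = n·g(n)`, there is a ground-model `h`-slalom `ψ`,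
namely `ψ(n) = {k : μ(⟦k ∈ φ̇(n)⟧) ≥ 1/n}`, such that for every `f`, if `ψ` does not
localize `f` then it is forced that `φ̇` does not localize `f`. -/
theorem stmt13 {A : Type*} [CompleteBooleanAlgebra A] (μ : A → ℝ)
    (hbot : μ ⊥ = 0) (htop : μ ⊤ = 1)
    (hadd : ∀ a b : A, a ⊓ b = ⊥ → μ (a ⊔ b) = μ a + μ b)
    (hpos : ∀ a : A, a ≠ ⊥ → 0 < μ a)
    (g : ℕ → ℕ) (Φ : ℕ → ℕ → A)
    (hname : ∀ n : ℕ, ∀ s : Finset ℕ, g n < s.card → (s.inf fun k => Φ n k) = ⊥) :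
    ∃ ψ : ℕ → Finset ℕ,
      (∀ n, (ψ n).card ≤ n * g n) ∧
      (∀ n, 1 ≤ n → ∀ k : ℕ, k ∈ ψ n ↔ 1 / (n : ℝ) ≤ μ (Φ n k)) ∧
      (∀ f : ℕ → ℕ, (∀ n₀ : ℕ, ∃ n, n₀ ≤ n ∧ f n ∉ ψ n) →
        ∀ n₀ : ℕ, (⨅ (n : ℕ) (_ : n₀ ≤ n), Φ n (f n)) = ⊥) := by
  classical
  have hcard : ∀ n : ℕ, 1 ≤ n → ∀ t : Finset ℕ,
      (↑t ⊆ {k | 1 / (n : ℝ) ≤ μ (Φ n k)}) → t.card ≤ n * g n := by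
    intro n hn t ht
    have hnR : (0 : ℝ) < n := by exact_mod_cast hn
    have h1 : (t.card : ℝ) * (1 / n) ≤ ∑ k ∈ t, μ (Φ n k) := by
      have := Finset.card_nsmul_le_sum t (fun k => μ (Φ n k)) (1 / (n : ℝ))
        (fun k hk => ht hk)
      simpa [nsmul_eq_mul] using this
    have h2 : ∑ k ∈ t, μ (Φ n k) ≤ g n :=
      sum_mu_le μ hbot htop hadd hpos (fun k => Φ n k) (g n) (fun s hs => hname n s hs) t
    have h3 : (t.card : ℝ) * (1 / n) ≤ g n := le_trans h1 h2
    rw [mul_one_div, div_le_iff₀ hnR] at h3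
    have h4 : (t.card : ℝ) ≤ ((n * g n : ℕ) : ℝ) := by push_cast; nlinarith
    exact_mod_cast h4
  have hfin : ∀ n : ℕ, 1 ≤ n → {k | 1 / (n : ℝ) ≤ μ (Φ n k)}.Finite := by
    intro n hn
    by_contra hinf
    obtain ⟨t, hts, htc⟩ := Set.Infinite.exists_subset_card_eq hinf (n * g n + 1)
    have := hcard n hn t hts
    omega
  refine ⟨fun n => if h : 1 ≤ n then (hfin n h).toFinset else ∅, ?_, ?_, ?_⟩
  · intro n
    by_cases h : 1 ≤ n
    · show (dite _ _ _ : Finset ℕ).card ≤ _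
      rw [dif_pos h]
      exact hcard n h _ (by simp)
    · show (dite _ _ _ : Finset ℕ).card ≤ _
      rw [dif_neg h, Finset.card_empty]
      omega
  · intro n hn k
    show k ∈ (dite _ _ _ : Finset ℕ) ↔ _
    rw [dif_pos hn, Set.Finite.mem_toFinset]
    rfl
  · intro f hf n₀
    by_contra hne
    have hμpos := hpos _ hne
    obtain ⟨n₁, hn₁⟩ := exists_nat_one_div_lt hμpos
    obtain ⟨n, hn, hfn⟩ := hf (max n₀ (n₁ + 1))
    have hn0 : n₀ ≤ n := le_trans (le_max_left _ _) hn
    have hn1 : n₁ + 1 ≤ n := le_trans (le_max_right _ _) hn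
    have h1n : 1 ≤ n := by omega
    have hμle : μ (⨅ (m : ℕ) (_ : n₀ ≤ m), Φ m (f m)) ≤ μ (Φ n (f n)) :=
      mu_mono μ hbot hadd hpos (iInf₂_le n hn0)
    have hnot : ¬ (1 / (n : ℝ) ≤ μ (Φ n (f n))) := by
      intro hcon
      apply hfn
      show f n ∈ (dite _ _ _ : Finset ℕ)
      rw [dif_pos h1n, Set.Finite.mem_toFinset]
      exact hcon
    push_neg at hnot
    have hd : (1 : ℝ) / n ≤ 1 / (n₁ + 1) := by
      apply one_div_le_one_div_of_le
      · positivity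
      · exact_mod_cast hn1
    linarith
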